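/- arXiv:2205.04417 — 4 statements merged into one kernel-verified Lean document; each statement's English description precedes it below -/
import Mathlib

section
/- Let K, M ∈ ℝ^{n×n} be symmetric and invertible, let z_{-M_-}, …, z_{M_+} be real numbers such that each K + z_jM is invertible, let w_{-M_-}, …, w_{M_+} be real weights, and let r be a natural number. Define C = (Σ_{j=-M_-}^{M_+} w_j (K + z_jM)^{-1}M) (K^{-1}M)^r. Then C is self-adjoint with respect to the M-weighted inner product ⟨u, v⟩_M = uᵀMv, i.e., CᵀM = MC (equivalently, M^{-1}CᵀM = C). -/
open Matrix Finset

/-- The discretized Whittle–Matérn covariance matrix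
`C = (Σ_{j=-M₋}^{M₊} w_j (K + z_jM)⁻¹M)(K⁻¹M)^r` is self-adjoint with respect to the
`M`-weighted inner product `⟨u,v⟩_M = uᵀMv`, i.e. `CᵀM = MC`. -/
theorem stmt_2 {n : ℕ} (K M : Matrix (Fin n) (Fin n) ℝ)
    (hKsym : K.IsSymm) (hMsym : M.IsSymm) (hK : IsUnit K) (hM : IsUnit M)
    (Mminus Mplus : ℕ) (z w : ℤ → ℝ)
    (hz : ∀ j ∈ Finset.Icc (-(Mminus : ℤ)) (Mplus : ℤ), IsUnit (K + z j • M))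
    (r : ℕ)
    (C : Matrix (Fin n) (Fin n) ℝ)
    (hC : C = (∑ j ∈ Finset.Icc (-(Mminus : ℤ)) (Mplus : ℤ),
        w j • ((K + z j • M)⁻¹ * M)) * (K⁻¹ * M) ^ r) :
    Cᵀ * M = M * C := by
  have hKdet : IsUnit K.det := (Matrix.isUnit_iff_isUnit_det K).mp hK
  have hKinvT : K⁻¹ᵀ = K⁻¹ := by
    rw [Matrix.transpose_nonsing_inv, hKsym.eq]
  set P : Matrix (Fin n) (Fin n) ℝ := K⁻¹ * M with hP
  -- P is M-self-adjoint
  have hPM : Pᵀ * M = M * P := by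
    rw [hP, Matrix.transpose_mul, hKinvT, hMsym.eq, Matrix.mul_assoc]
  -- powers of P are M-self-adjoint
  have hPrM : ∀ m : ℕ, (P ^ m)ᵀ * M = M * P ^ m := by
    intro m
    induction m with
    | zero => simp
    | succ m ih =>
      rw [pow_succ, Matrix.transpose_mul, Matrix.mul_assoc, ih, ← Matrix.mul_assoc, hPM,
        Matrix.mul_assoc, ← pow_succ']
      rw [pow_succ]
  -- each quadrature term B_j
  have key : ∀ j ∈ Finset.Icc (-(Mminus : ℤ)) (Mplus : ℤ),
      ((K + z j • M)⁻¹ * M)ᵀ * M = M * ((K + z j • M)⁻¹ * M)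
      ∧ P * ((K + z j • M)⁻¹ * M) = ((K + z j • M)⁻¹ * M) * P := by
    intro j hj
    set A := K + z j • M with hA
    have hAu := hz j hj
    have hAdet : IsUnit A.det := (Matrix.isUnit_iff_isUnit_det A).mp hAu
    have hAsym : Aᵀ = A := by
      rw [hA, Matrix.transpose_add, Matrix.transpose_smul, hKsym.eq, hMsym.eq]
    have hAinvT : A⁻¹ᵀ = A⁻¹ := by rw [Matrix.transpose_nonsing_inv, hAsym]
    constructor
    · rw [Matrix.transpose_mul, hAinvT, hMsym.eq, Matrix.mul_assoc]
    · -- A * (K⁻¹ * M) = (M * K⁻¹) * A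
      have h1 : A * (K⁻¹ * M) = M * K⁻¹ * A := by
        rw [hA, Matrix.add_mul, Matrix.mul_add, Matrix.smul_mul, Matrix.mul_smul,
          ← Matrix.mul_assoc K K⁻¹, Matrix.mul_nonsing_inv K hKdet, Matrix.one_mul,
          Matrix.mul_assoc M K⁻¹ K, Matrix.nonsing_inv_mul K hKdet, Matrix.mul_one,
          Matrix.mul_assoc]
      -- hence K⁻¹ * M * A⁻¹ = A⁻¹ * (M * K⁻¹)
      have h2 : K⁻¹ * M * A⁻¹ = A⁻¹ * (M * K⁻¹) := by
        calc K⁻¹ * M * A⁻¹ = A⁻¹ * A * (K⁻¹ * M) * A⁻¹ := by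
              rw [Matrix.nonsing_inv_mul A hAdet, Matrix.one_mul]
          _ = A⁻¹ * (M * K⁻¹ * A) * A⁻¹ := by rw [Matrix.mul_assoc A⁻¹ A, h1]
          _ = A⁻¹ * (M * K⁻¹) := by
              rw [Matrix.mul_assoc A⁻¹ (M * K⁻¹ * A) A⁻¹, Matrix.mul_assoc (M * K⁻¹) A A⁻¹,
                Matrix.mul_nonsing_inv A hAdet, Matrix.mul_one]
      simp only [hP, Matrix.mul_assoc]
      calc K⁻¹ * (M * (A⁻¹ * M)) = K⁻¹ * M * A⁻¹ * M := by simp only [Matrix.mul_assoc]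
        _ = A⁻¹ * (M * K⁻¹) * M := by rw [h2]
        _ = A⁻¹ * (M * (K⁻¹ * M)) := by simp only [Matrix.mul_assoc]
  set S := ∑ j ∈ Finset.Icc (-(Mminus : ℤ)) (Mplus : ℤ),
      w j • ((K + z j • M)⁻¹ * M) with hS
  have hSM : Sᵀ * M = M * S := by
    rw [hS, Matrix.transpose_sum, Finset.sum_mul, Finset.mul_sum]
    refine Finset.sum_congr rfl fun j hj => ?_
    rw [Matrix.transpose_smul, Matrix.smul_mul, Matrix.mul_smul, (key j hj).1]
  have hcomm : ∀ m : ℕ, P ^ m * S = S * P ^ m := by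
    intro m
    rw [hS, Finset.mul_sum, Finset.sum_mul]
    refine Finset.sum_congr rfl fun j hj => ?_
    rw [Matrix.mul_smul, Matrix.smul_mul]
    congr 1
    induction m with
    | zero => simp
    | succ m ih =>
      rw [pow_succ, Matrix.mul_assoc, (key j hj).2, ← Matrix.mul_assoc, ih, Matrix.mul_assoc]
  rw [hC, Matrix.transpose_mul, Matrix.mul_assoc, hSM, ← Matrix.mul_assoc, hPrM,
    Matrix.mul_assoc, hcomm]
end

section
/- Let K, M ∈ ℝ^{n×n} be symmetric positive definite, let z_{-M_-}, …, z_{M_+} be nonnegative real numbers, let w_{-M_-}, …, w_{M_+} be strictly positive real weights, and let r be a natural number. Define C = (Σ_{j=-M_-}^{M_+} w_j (K + z_jM)^{-1}M) (K^{-1}M)^r. Then the matrix Q = C M^{-1} is symmetric positive definite with respect to the standard Euclidean inner product: Qᵀ = Q and xᵀQx > 0 for every nonzero x ∈ ℝⁿ. -/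
open Matrix Finset

section Aux

variable {n : ℕ}

private lemma posDef_smul' {c : ℝ} {A : Matrix (Fin n) (Fin n) ℝ} (hc : 0 < c)
    (hA : A.PosDef) : (c • A).PosDef := by
  refine ⟨?_, fun x hx => ?_⟩
  · unfold Matrix.IsHermitian
    rw [conjTranspose_smul, star_trivial, hA.1.eq]
  · exact (hA.smul hc).2 hx

private lemma posSemidef_smul' {c : ℝ} {A : Matrix (Fin n) (Fin n) ℝ} (hc : 0 ≤ c)
    (hA : A.PosSemidef) : (c • A).PosSemidef := by
  refine ⟨?_, fun x => ?_⟩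
  · unfold Matrix.IsHermitian
    rw [conjTranspose_smul, star_trivial, hA.1.eq]
  · exact (hA.smul hc).2 x

/-- Congruence preserves positive definiteness (real case, transpose form). -/
private lemma posDef_conj' {A B : Matrix (Fin n) (Fin n) ℝ} (hA : A.PosDef)
    (hB : IsUnit B) : (B * A * Bᵀ).PosDef := by
  have hsd := hA.posSemidef.mul_mul_conjTranspose_same B
  rw [conjTranspose_eq_transpose_of_trivial] at hsd
  refine PosDef.of_dotProduct_mulVec_pos hsd.1 fun x hx => ?_
  have hy : Bᵀ *ᵥ x ≠ 0 := by
    have hinj : Function.Injective (Bᵀ.mulVec) := by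
      rw [mulVec_injective_iff_isUnit, Matrix.isUnit_transpose]
      exact hB
    intro h
    exact hx (hinj (by simpa using h))
  have key : star x ⬝ᵥ (B * A * Bᵀ) *ᵥ x
      = star (Bᵀ *ᵥ x) ⬝ᵥ A *ᵥ (Bᵀ *ᵥ x) := by
    simp only [star_trivial, ← mulVec_mulVec]
    rw [dotProduct_mulVec x B, mulVec_transpose]
  rw [key]
  exact hA.dotProduct_mulVec_pos hy

private lemma posSemidef_sum' {ι : Type*} (s : Finset ι)
    (f : ι → Matrix (Fin n) (Fin n) ℝ) (h : ∀ i ∈ s, (f i).PosSemidef) :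
    (∑ i ∈ s, f i).PosSemidef := by
  classical
  induction s using Finset.induction_on with
  | empty => simpa using Matrix.PosSemidef.zero
  | insert _ _ hni ih =>
    rw [Finset.sum_insert hni]
    exact (h _ (Finset.mem_insert_self _ _)).add
      (ih fun i hi => h i (Finset.mem_insert_of_mem hi))

private lemma posDef_sum' {ι : Type*} (s : Finset ι) (hs : s.Nonempty)
    (f : ι → Matrix (Fin n) (Fin n) ℝ) (h : ∀ i ∈ s, (f i).PosDef) :
    (∑ i ∈ s, f i).PosDef := by
  classical
  obtain ⟨i, hi⟩ := hs
  rw [← Finset.add_sum_erase s f hi]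
  exact (h i hi).add_posSemidef
    (posSemidef_sum' _ _ fun j hj => (h j (Finset.mem_of_mem_erase hj)).posSemidef)

end Aux

/-- For symmetric positive definite stiffness matrix `K` and mass matrix `M`,
nonnegative quadrature nodes `z_j` and strictly positive weights `w_j`, the matrix
`Q = C M⁻¹` with `C = (Σ_{j=-M₋}^{M₊} w_j (K + z_jM)⁻¹M)(K⁻¹M)^r` is symmetric
positive definite with respect to the standard Euclidean inner product. -/
theorem stmt_3 {n : ℕ} (K M : Matrix (Fin n) (Fin n) ℝ)
    (hK : K.PosDef) (hM : M.PosDef)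
    (Mminus Mplus : ℕ) (z w : ℤ → ℝ)
    (hz : ∀ j ∈ Finset.Icc (-(Mminus : ℤ)) (Mplus : ℤ), 0 ≤ z j)
    (hw : ∀ j ∈ Finset.Icc (-(Mminus : ℤ)) (Mplus : ℤ), 0 < w j)
    (r : ℕ)
    (C Q : Matrix (Fin n) (Fin n) ℝ)
    (hC : C = (∑ j ∈ Finset.Icc (-(Mminus : ℤ)) (Mplus : ℤ),
        w j • ((K + z j • M)⁻¹ * M)) * (K⁻¹ * M) ^ r)
    (hQ : Q = C * M⁻¹) :
    Qᵀ = Q ∧ ∀ x : Fin n → ℝ, x ≠ 0 → 0 < x ⬝ᵥ Q.mulVec x := by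
  classical
  have hKt : Kᵀ = K := by
    rw [← conjTranspose_eq_transpose_of_trivial]; exact hK.1
  have hMt : Mᵀ = M := by
    rw [← conjTranspose_eq_transpose_of_trivial]; exact hM.1
  have hKu : IsUnit K := hK.isUnit
  have hMu : IsUnit M := hM.isUnit
  have hKK : K * K⁻¹ = 1 := mul_nonsing_inv K (isUnit_iff_isUnit_det K |>.mp hKu)
  have hKK' : K⁻¹ * K = 1 := nonsing_inv_mul K (isUnit_iff_isUnit_det K |>.mp hKu)
  have hMM : M * M⁻¹ = 1 := mul_nonsing_inv M (isUnit_iff_isUnit_det M |>.mp hMu)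
  have hMM' : M⁻¹ * M = 1 := nonsing_inv_mul M (isUnit_iff_isUnit_det M |>.mp hMu)
  -- transpose of K * M⁻¹
  have hNt : (K * M⁻¹)ᵀ = M⁻¹ * K := by
    rw [transpose_mul, transpose_nonsing_inv, hKt, hMt]
  have hNu : IsUnit (K * M⁻¹) := hKu.mul hM.inv.isUnit
  -- G m = (K M⁻¹)^m K is positive definite
  have hG : ∀ m : ℕ, (((K * M⁻¹) ^ m) * K).PosDef := by
    intro m
    induction m using Nat.twoStepInduction with
    | zero => simpa using hK
    | one =>
      have := posDef_conj' hM.inv hKu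
      rw [hKt] at this
      simpa [pow_one] using this
    | more m ih _ =>
      have key : ((K * M⁻¹) ^ (m + 2)) * K
          = (K * M⁻¹) * (((K * M⁻¹) ^ m) * K) * (K * M⁻¹)ᵀ := by
        rw [hNt, pow_succ, pow_succ']
        simp only [Matrix.mul_assoc]
      rw [key]
      exact posDef_conj' ih hNu
  -- H m = (K M⁻¹)^m M is positive definite
  have hH : ∀ m : ℕ, (((K * M⁻¹) ^ m) * M).PosDef := by
    intro m
    cases m with
    | zero => simpa using hM
    | succ m =>
      have key : ((K * M⁻¹) ^ (m + 1)) * M = ((K * M⁻¹) ^ m) * K := by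
        rw [pow_succ]
        simp only [Matrix.mul_assoc, hMM', Matrix.mul_one]
      rw [key]
      exact hG m
  -- each shifted operator S_j = (K M⁻¹)^r (K + z_j M) is positive definite
  have hS : ∀ j ∈ Finset.Icc (-(Mminus : ℤ)) (Mplus : ℤ),
      (((K * M⁻¹) ^ r) * (K + z j • M)).PosDef := by
    intro j hj
    have : ((K * M⁻¹) ^ r) * (K + z j • M)
        = ((K * M⁻¹) ^ r) * K + z j • (((K * M⁻¹) ^ r) * M) := by
      rw [Matrix.mul_add, Matrix.mul_smul]
    rw [this]
    exact (hG r).add_posSemidef (posSemidef_smul' (hz j hj) (hH r).posSemidef)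
  -- (K M⁻¹)^r and (M K⁻¹)^r are mutually inverse
  have hpowinv : ∀ m : ℕ, ((K * M⁻¹) ^ m) * ((M * K⁻¹) ^ m) = 1 := by
    intro m
    induction m with
    | zero => simp
    | succ m ih =>
      rw [pow_succ, pow_succ']
      calc (K * M⁻¹) ^ m * (K * M⁻¹) * (M * K⁻¹ * (M * K⁻¹) ^ m)
          = (K * M⁻¹) ^ m * (K * (M⁻¹ * M) * K⁻¹) * (M * K⁻¹) ^ m := by
            simp only [Matrix.mul_assoc]
        _ = 1 := by rw [hMM', Matrix.mul_one, hKK, Matrix.mul_one, ih]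
  -- M (K⁻¹ M)^r = (M K⁻¹)^r M
  have hswap : ∀ m : ℕ, M * ((K⁻¹ * M) ^ m) = ((M * K⁻¹) ^ m) * M := by
    intro m
    induction m with
    | zero => simp
    | succ m ih =>
      calc M * (K⁻¹ * M) ^ (m + 1)
          = (M * (K⁻¹ * M) ^ m) * (K⁻¹ * M) := by
            rw [pow_succ, Matrix.mul_assoc]
        _ = (M * K⁻¹) ^ m * M * (K⁻¹ * M) := by rw [ih]
        _ = (M * K⁻¹) ^ (m + 1) * M := by
            rw [pow_succ]
            simp only [Matrix.mul_assoc]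
  -- per-term identity: (K + z_j M)⁻¹ M (K⁻¹ M)^r M⁻¹ = S_j⁻¹
  have hterm : ∀ j ∈ Finset.Icc (-(Mminus : ℤ)) (Mplus : ℤ),
      (K + z j • M)⁻¹ * (M * ((K⁻¹ * M) ^ r * M⁻¹))
        = (((K * M⁻¹) ^ r) * (K + z j • M))⁻¹ := by
    intro j hj
    have hAj : (K + z j • M).PosDef :=
      hK.add_posSemidef (posSemidef_smul' (hz j hj) hM.posSemidef)
    have hAjinv : (K + z j • M) * (K + z j • M)⁻¹ = 1 :=
      mul_nonsing_inv _ (isUnit_iff_isUnit_det _ |>.mp hAj.isUnit)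
    symm
    apply Matrix.inv_eq_right_inv
    have lhs1 : (K + z j • M)⁻¹ * (M * ((K⁻¹ * M) ^ r * M⁻¹))
        = (K + z j • M)⁻¹ * ((M * K⁻¹) ^ r) := by
      calc (K + z j • M)⁻¹ * (M * ((K⁻¹ * M) ^ r * M⁻¹))
          = (K + z j • M)⁻¹ * (M * (K⁻¹ * M) ^ r) * M⁻¹ := by
            simp only [Matrix.mul_assoc]
        _ = (K + z j • M)⁻¹ * ((M * K⁻¹) ^ r * M) * M⁻¹ := by rw [hswap r]
        _ = (K + z j • M)⁻¹ * ((M * K⁻¹) ^ r) * (M * M⁻¹) := by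
            simp only [Matrix.mul_assoc]
        _ = (K + z j • M)⁻¹ * ((M * K⁻¹) ^ r) := by rw [hMM, Matrix.mul_one]
    rw [lhs1]
    calc ((K * M⁻¹) ^ r) * (K + z j • M)
          * ((K + z j • M)⁻¹ * ((M * K⁻¹) ^ r))
        = ((K * M⁻¹) ^ r) * ((K + z j • M) * (K + z j • M)⁻¹) * ((M * K⁻¹) ^ r) := by
          simp only [Matrix.mul_assoc]
      _ = ((K * M⁻¹) ^ r) * ((M * K⁻¹) ^ r) := by
          rw [hAjinv, Matrix.mul_one]
      _ = 1 := hpowinv r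
  -- rewrite Q as a sum of positive multiples of positive definite matrices
  have hQsum : Q = ∑ j ∈ Finset.Icc (-(Mminus : ℤ)) (Mplus : ℤ),
      w j • (((K * M⁻¹) ^ r) * (K + z j • M))⁻¹ := by
    rw [hQ, hC, Matrix.mul_assoc, Finset.sum_mul]
    refine Finset.sum_congr rfl fun j hj => ?_
    rw [smul_mul_assoc, Matrix.mul_assoc, hterm j hj]
  -- the index set is nonempty
  have hne : (Finset.Icc (-(Mminus : ℤ)) (Mplus : ℤ)).Nonempty :=
    ⟨0, Finset.mem_Icc.mpr ⟨neg_nonpos.mpr (Int.ofNat_nonneg _), Int.ofNat_nonneg _⟩⟩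
  have hQpd : Q.PosDef := by
    rw [hQsum]
    refine posDef_sum' _ hne _ fun j hj => ?_
    exact posDef_smul' (hw j hj) (hS j hj).inv
  refine ⟨?_, fun x hx => ?_⟩
  · rw [← conjTranspose_eq_transpose_of_trivial]; exact hQpd.1
  · simpa using hQpd.dotProduct_mulVec_pos hx
end

section
/- Let Q ∈ ℝ^{n×n} be symmetric positive definite, let V ∈ ℝ^{n×k} satisfy VᵀQV = I_k, let W ∈ ℝ^{k×k} be orthogonal (WᵀW = I_k), let Φ = diag(φ₁, …, φ_k) with all φ_i ≥ 0, let λ ≠ 0, and set Z = QVW. Then the matrix ZΦZᵀ + λ²Q is invertible and Q(ZΦZᵀ + λ²Q)^{-1}Q = λ^{-2}Q − ZΔZᵀ, where Δ = diag(λ^{-2}φ₁/(φ₁ + λ²), …, λ^{-2}φ_k/(φ_k + λ²)). -/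
open Matrix

/-- Woodbury-identity computation underlying the low-rank posterior covariance
approximation: with `Q` SPD, `VᵀQV = I`, `W` orthogonal, `Φ = diag(φ)` with `φ ≥ 0`,
`λ ≠ 0` and `Z = QVW`, the matrix `ZΦZᵀ + λ²Q` is invertible and
`Q(ZΦZᵀ + λ²Q)⁻¹Q = λ⁻²Q − ZΔZᵀ` where `Δ = diag(λ⁻²φᵢ/(φᵢ + λ²))`. -/
theorem stmt_8 {n k : ℕ} (Q : Matrix (Fin n) (Fin n) ℝ) (hQ : Q.PosDef)
    (V : Matrix (Fin n) (Fin k) ℝ) (hV : Vᵀ * Q * V = 1)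
    (W : Matrix (Fin k) (Fin k) ℝ) (hW : Wᵀ * W = 1)
    (φ : Fin k → ℝ) (hφ : ∀ i, 0 ≤ φ i)
    (lam : ℝ) (hlam : lam ≠ 0)
    (Z : Matrix (Fin n) (Fin k) ℝ) (hZ : Z = Q * V * W) :
    IsUnit (Z * Matrix.diagonal φ * Zᵀ + lam ^ 2 • Q) ∧
    Q * (Z * Matrix.diagonal φ * Zᵀ + lam ^ 2 • Q)⁻¹ * Q
      = (lam ^ 2)⁻¹ • Q
        - Z * Matrix.diagonal (fun i => (lam ^ 2)⁻¹ * φ i / (φ i + lam ^ 2)) * Zᵀ := by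
  have hl2 : (0:ℝ) < lam ^ 2 := by positivity
  have hQdet : IsUnit Q.det := isUnit_iff_ne_zero.2 (ne_of_gt hQ.det_pos)
  have hQ1 : Q * Q⁻¹ = 1 := Matrix.mul_nonsing_inv Q hQdet
  have hQ2 : Q⁻¹ * Q = 1 := Matrix.nonsing_inv_mul Q hQdet
  have hQt : Qᵀ = Q := hQ.isHermitian.eq
  set δ : Fin k → ℝ := fun i => (lam ^ 2)⁻¹ * φ i / (φ i + lam ^ 2) with hδ
  set M := Z * Matrix.diagonal φ * Zᵀ + lam ^ 2 • Q with hM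
  set N := (lam ^ 2)⁻¹ • Q⁻¹ - Q⁻¹ * Z * Matrix.diagonal δ * (Zᵀ * Q⁻¹) with hN
  have hZt : Zᵀ = Wᵀ * Vᵀ * Q := by
    rw [hZ]; simp [Matrix.transpose_mul, hQt, Matrix.mul_assoc]
  have hkey : Zᵀ * Q⁻¹ * Z = 1 := by
    rw [hZt, hZ]
    calc Wᵀ * Vᵀ * Q * Q⁻¹ * (Q * V * W)
        = Wᵀ * (Vᵀ * Q * V) * W := by
          rw [Matrix.mul_assoc (Wᵀ * Vᵀ * Q) Q⁻¹, Matrix.mul_assoc Q V W,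
            Matrix.nonsing_inv_mul_cancel_left Q _ hQdet]
          simp only [Matrix.mul_assoc]
      _ = 1 := by rw [hV, Matrix.mul_one, hW]
  have hdiag : Matrix.diagonal φ * Matrix.diagonal δ + lam ^ 2 • Matrix.diagonal δ
      = (lam ^ 2)⁻¹ • Matrix.diagonal φ := by
    ext i j
    rcases eq_or_ne i j with rfl | h
    · have hne : φ i + lam ^ 2 ≠ 0 := ne_of_gt (add_pos_of_nonneg_of_pos (hφ i) hl2)
      simp only [Matrix.add_apply, Matrix.smul_apply, Matrix.diagonal_mul_diagonal,
        Matrix.diagonal_apply_eq, smul_eq_mul, hδ]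
      field_simp
    · simp [Matrix.diagonal_mul_diagonal, Matrix.diagonal_apply_ne _ h]
  have hMN : M * N = 1 := by
    have e1 : Q * (Q⁻¹ * Z * Matrix.diagonal δ * (Zᵀ * Q⁻¹))
        = Z * Matrix.diagonal δ * (Zᵀ * Q⁻¹) := by
      calc Q * (Q⁻¹ * Z * Matrix.diagonal δ * (Zᵀ * Q⁻¹))
          = Q * Q⁻¹ * Z * Matrix.diagonal δ * Zᵀ * Q⁻¹ := by
            simp only [Matrix.mul_assoc]
        _ = Z * Matrix.diagonal δ * Zᵀ * Q⁻¹ := by rw [hQ1, Matrix.one_mul]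
        _ = Z * Matrix.diagonal δ * (Zᵀ * Q⁻¹) := by rw [Matrix.mul_assoc]
    have e2 : Z * Matrix.diagonal φ * Zᵀ * (Q⁻¹ * Z * Matrix.diagonal δ * (Zᵀ * Q⁻¹))
        = Z * (Matrix.diagonal φ * Matrix.diagonal δ) * (Zᵀ * Q⁻¹) := by
      calc Z * Matrix.diagonal φ * Zᵀ * (Q⁻¹ * Z * Matrix.diagonal δ * (Zᵀ * Q⁻¹))
          = Z * Matrix.diagonal φ * (Zᵀ * Q⁻¹ * Z) * Matrix.diagonal δ * (Zᵀ * Q⁻¹) := by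
            simp only [← Matrix.mul_assoc]
        _ = _ := by
            rw [hkey, Matrix.mul_one, Matrix.mul_assoc Z (Matrix.diagonal φ)]
    rw [hM, hN, Matrix.mul_sub, Matrix.add_mul, Matrix.add_mul,
      Matrix.mul_smul, Matrix.smul_mul, Matrix.smul_mul, Matrix.mul_smul,
      hQ1, e1, e2, smul_smul, mul_inv_cancel₀ (ne_of_gt hl2), one_smul]
    have e4 : Z * (Matrix.diagonal φ * Matrix.diagonal δ) * (Zᵀ * Q⁻¹)
          + lam ^ 2 • (Z * Matrix.diagonal δ * (Zᵀ * Q⁻¹))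
        = (lam ^ 2)⁻¹ • (Z * Matrix.diagonal φ * Zᵀ * Q⁻¹) := by
      have h5 : Z * (Matrix.diagonal φ * Matrix.diagonal δ) * (Zᵀ * Q⁻¹)
          + lam ^ 2 • (Z * Matrix.diagonal δ * (Zᵀ * Q⁻¹))
          = Z * (Matrix.diagonal φ * Matrix.diagonal δ + lam ^ 2 • Matrix.diagonal δ)
            * (Zᵀ * Q⁻¹) := by
        rw [Matrix.mul_add, Matrix.add_mul, Matrix.mul_smul, Matrix.smul_mul]
      rw [h5, hdiag, Matrix.mul_smul, Matrix.smul_mul]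
      simp only [← Matrix.mul_assoc]
    rw [e4]
    abel
  have hUnit : IsUnit M := by
    have : IsUnit M.det := Matrix.isUnit_det_of_right_inverse hMN
    exact (Matrix.isUnit_iff_isUnit_det M).2 this
  refine ⟨hUnit, ?_⟩
  have hinv : M⁻¹ = N := Matrix.inv_eq_right_inv hMN
  rw [hinv, hN, Matrix.mul_sub, Matrix.sub_mul, Matrix.mul_smul, Matrix.smul_mul,
    hQ1]
  congr 1
  · rw [Matrix.one_mul]
  · calc Q * (Q⁻¹ * Z * Matrix.diagonal δ * (Zᵀ * Q⁻¹)) * Q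
        = (Q * Q⁻¹) * Z * Matrix.diagonal δ * Zᵀ * (Q⁻¹ * Q) := by
          simp only [Matrix.mul_assoc]
      _ = Z * Matrix.diagonal δ * Zᵀ := by
          rw [hQ1, hQ2, Matrix.one_mul, Matrix.mul_one]
end

section
/- Let Γ ∈ ℝ^{m×m} and Q ∈ ℝ^{n×n} be symmetric positive definite, let F ∈ ℝ^{m×n}, let U ∈ ℝ^{m×(k+1)} satisfy UᵀΓ^{-1}U = I_{k+1}, let V ∈ ℝ^{n×k} satisfy VᵀQV = I_k, let B ∈ ℝ^{(k+1)×k} satisfy FQV = UB, let δ₁ ∈ ℝ and b = δ₁Ue₁ where e₁ is the first standard basis vector of ℝ^{k+1}, and let λ ∈ ℝ. Then for every z ∈ ℝ^k: ½(FQVz − b)ᵀΓ^{-1}(FQVz − b) + (λ²/2)(Vz)ᵀQ(Vz) = ½‖Bz − δ₁e₁‖₂² + (λ²/2)‖z‖₂². -/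
open Matrix


private lemma quadform_conj {a b : ℕ} (A : Matrix (Fin a) (Fin b) ℝ)
    (P : Matrix (Fin a) (Fin a) ℝ) (w : Fin b → ℝ) :
    (A.mulVec w) ⬝ᵥ P.mulVec (A.mulVec w) = w ⬝ᵥ (Aᵀ * P * A).mulVec w := by
  simp only [dotProduct_mulVec, vecMul_vecMul]
  rw [← vecMul_transpose, vecMul_vecMul, Matrix.mul_assoc]

/-- Identity justifying the GenHyBR projected problem: after `k` steps of the
generalized Golub–Kahan bidiagonalization with `FQV = UB`, `UᵀΓ⁻¹U = I`, `VᵀQV = I`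
and `b = δ₁Ue₁`, the Tikhonov functional restricted to the search space `m̂ = Vz`
reduces exactly to `½‖Bz − δ₁e₁‖₂² + (λ²/2)‖z‖₂²`. -/
theorem stmt_10 {m n k : ℕ}
    (Γ : Matrix (Fin m) (Fin m) ℝ) (hΓ : Γ.PosDef)
    (Q : Matrix (Fin n) (Fin n) ℝ) (hQ : Q.PosDef)
    (F : Matrix (Fin m) (Fin n) ℝ)
    (U : Matrix (Fin m) (Fin (k + 1)) ℝ) (hU : Uᵀ * Γ⁻¹ * U = 1)
    (V : Matrix (Fin n) (Fin k) ℝ) (hV : Vᵀ * Q * V = 1)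
    (B : Matrix (Fin (k + 1)) (Fin k) ℝ) (hB : F * Q * V = U * B)
    (δ₁ : ℝ) (e₁ : Fin (k + 1) → ℝ) (he₁ : e₁ = Pi.single (0 : Fin (k + 1)) 1)
    (b : Fin m → ℝ) (hb : b = δ₁ • U.mulVec e₁)
    (lam : ℝ) :
    ∀ z : Fin k → ℝ,
      (1 / 2) * ((F.mulVec (Q.mulVec (V.mulVec z)) - b) ⬝ᵥ
          Γ⁻¹.mulVec (F.mulVec (Q.mulVec (V.mulVec z)) - b)) +
        (lam ^ 2 / 2) * ((V.mulVec z) ⬝ᵥ Q.mulVec (V.mulVec z))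
      = (1 / 2) * ((B.mulVec z - δ₁ • e₁) ⬝ᵥ (B.mulVec z - δ₁ • e₁)) +
        (lam ^ 2 / 2) * (z ⬝ᵥ z) := by
  intro z
  have key : F.mulVec (Q.mulVec (V.mulVec z)) - b = U.mulVec (B.mulVec z - δ₁ • e₁) := by
    rw [hb, mulVec_sub, mulVec_smul, mulVec_mulVec, mulVec_mulVec, hB,
      ← mulVec_mulVec]
  rw [key, quadform_conj, hU, quadform_conj V Q z, hV, one_mulVec, one_mulVec]
end
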